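/- There exists an ordering ξ of the Pascal graph for which the set X_{ξ,min} of infinite paths all of whose edges are ξ-minimal is uncountable; moreover, there exists an ordering ξ for which both X_{ξ,min} and X_{ξ,max} (the set of paths all of whose edges are ξ-maximal) are uncountable. -/

import Mathlib

/-- Vertex reached after `n` moves: (number of `false` moves, number of `true` moves). -/
def vertexAt (γ : ℕ → Bool) (n : ℕ) : ℕ × ℕ :=
  (((Finset.range n).filter fun i => γ i = false).card,
   ((Finset.range n).filter fun i => γ i = true).card)

def childOf (v : ℕ × ℕ) (m : Bool) : ℕ × ℕ :=
  if m then (v.1, v.2 + 1) else (v.1 + 1, v.2)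

def MoveMin (ξ : ℕ × ℕ → Bool) (v : ℕ × ℕ) (m : Bool) : Prop :=
  (childOf v m).1 = 0 ∨ (childOf v m).2 = 0 ∨ m = !ξ (childOf v m)

def MoveMax (ξ : ℕ × ℕ → Bool) (v : ℕ × ℕ) (m : Bool) : Prop :=
  (childOf v m).1 = 0 ∨ (childOf v m).2 = 0 ∨ m = ξ (childOf v m)

def IsMinEdge (ξ : ℕ × ℕ → Bool) (γ : ℕ → Bool) (i : ℕ) : Prop :=
  MoveMin ξ (vertexAt γ i) (γ i)

def IsMaxEdge (ξ : ℕ × ℕ → Bool) (γ : ℕ → Bool) (i : ℕ) : Prop :=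
  MoveMax ξ (vertexAt γ i) (γ i)

def XMin (ξ : ℕ × ℕ → Bool) : Set (ℕ → Bool) := {γ | ∀ i, IsMinEdge ξ γ i}

def XMax (ξ : ℕ × ℕ → Bool) : Set (ℕ → Bool) := {γ | ∀ i, IsMaxEdge ξ γ i}

def XPrime (ξ : ℕ × ℕ → Bool) : Set (ℕ → Bool) :=
  {γ | ∃ δ ∈ XMin ξ ∪ XMax ξ, ∃ N : ℕ, ∀ n, N ≤ n → γ n = δ n}

/-- The all-ξ-minimal finite path (list of moves) from the root to a vertex. -/
def minPath (ξ : ℕ × ℕ → Bool) : ℕ × ℕ → List Bool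
  | (0, 0) => []
  | (x + 1, 0) => minPath ξ (x, 0) ++ [false]
  | (0, y + 1) => minPath ξ (0, y) ++ [true]
  | (x + 1, y + 1) =>
      if ξ (x + 1, y + 1) then minPath ξ (x, y + 1) ++ [false]
      else minPath ξ (x + 1, y) ++ [true]
  termination_by p => p.1 + p.2

/-- The all-ξ-maximal finite path (list of moves) from the root to a vertex. -/
def maxPath (ξ : ℕ × ℕ → Bool) : ℕ × ℕ → List Bool
  | (0, 0) => []
  | (x + 1, 0) => maxPath ξ (x, 0) ++ [false]
  | (0, y + 1) => maxPath ξ (0, y) ++ [true]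
  | (x + 1, y + 1) =>
      if ξ (x + 1, y + 1) then maxPath ξ (x + 1, y) ++ [true]
      else maxPath ξ (x, y + 1) ++ [false]
  termination_by p => p.1 + p.2

open Classical in
/-- The adic (Vershik) transformation determined by ξ (identity where undefined). -/
noncomputable def adicT (ξ : ℕ × ℕ → Bool) (γ : ℕ → Bool) : ℕ → Bool :=
  if h : ∃ i, ¬ IsMaxEdge ξ γ i then
    let i0 := Nat.find h
    let v := vertexAt γ (i0 + 1)
    let src : ℕ × ℕ := if ξ v then (v.1, v.2 - 1) else (v.1 - 1, v.2)
    fun n =>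
      if n < i0 then (minPath ξ src).getD n false
      else if n = i0 then ξ v
      else γ n
  else γ

open Classical in
/-- The inverse adic transformation determined by ξ (identity where undefined). -/
noncomputable def adicTInv (ξ : ℕ × ℕ → Bool) (γ : ℕ → Bool) : ℕ → Bool :=
  if h : ∃ i, ¬ IsMinEdge ξ γ i then
    let i0 := Nat.find h
    let v := vertexAt γ (i0 + 1)
    let src : ℕ × ℕ := if ξ v then (v.1 - 1, v.2) else (v.1, v.2 - 1)
    fun n =>
      if n < i0 then (maxPath ξ src).getD n false
      else if n = i0 then !ξ v
      else γ n
  else γ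

/-- ℤ-iterates of the adic transformation. -/
noncomputable def adicIter (ξ : ℕ × ℕ → Bool) : ℤ → (ℕ → Bool) → (ℕ → Bool)
  | Int.ofNat n, γ => (adicT ξ)^[n] γ
  | Int.negSucc n, γ => (adicTInv ξ)^[n + 1] γ

/-- The k-coding of the orbit of γ: symbols are the initial segments of length k. -/
noncomputable def omegaCode (ξ : ℕ × ℕ → Bool) (k : ℕ) (γ : ℕ → Bool) : ℤ → List Bool :=
  fun t => (List.range k).map (adicIter ξ t γ)

/-- Ordered list of all initial segments from the root to (x,y), in increasing ξ-order. -/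
def segList (ξ : ℕ × ℕ → Bool) : ℕ × ℕ → List (List Bool)
  | (0, 0) => [[]]
  | (x + 1, 0) => (segList ξ (x, 0)).map (· ++ [false])
  | (0, y + 1) => (segList ξ (0, y)).map (· ++ [true])
  | (x + 1, y + 1) =>
      if ξ (x + 1, y + 1) then
        (segList ξ (x, y + 1)).map (· ++ [false]) ++ (segList ξ (x + 1, y)).map (· ++ [true])
      else
        (segList ξ (x + 1, y)).map (· ++ [true]) ++ (segList ξ (x, y + 1)).map (· ++ [false])
  termination_by p => p.1 + p.2

/-- Level-k coded basic block at a vertex (x,y) with x+y ≥ k, a word over the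
alphabet of initial segments of length k. -/
def codedBlock (ξ : ℕ × ℕ → Bool) (k : ℕ) : ℕ × ℕ → List (List Bool)
  | (0, 0) => segList ξ (0, 0)
  | (x + 1, 0) => if x + 1 ≤ k then segList ξ (x + 1, 0) else [List.replicate k false]
  | (0, y + 1) => if y + 1 ≤ k then segList ξ (0, y + 1) else [List.replicate k true]
  | (x + 1, y + 1) =>
      if x + 1 + (y + 1) ≤ k then segList ξ (x + 1, y + 1)
      else if ξ (x + 1, y + 1) then codedBlock ξ k (x, y + 1) ++ codedBlock ξ k (x + 1, y)
      else codedBlock ξ k (x + 1, y) ++ codedBlock ξ k (x, y + 1)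
  termination_by p => p.1 + p.2

/-- Basic block over the alphabet {a,b}, with a = `false` and b = `true`. -/
def basicBlock (ξ : ℕ × ℕ → Bool) : ℕ × ℕ → List Bool
  | (0, 0) => []
  | (_ + 1, 0) => [false]
  | (0, _ + 1) => [true]
  | (x + 1, y + 1) =>
      if ξ (x + 1, y + 1) then basicBlock ξ (x, y + 1) ++ basicBlock ξ (x + 1, y)
      else basicBlock ξ (x + 1, y) ++ basicBlock ξ (x, y + 1)
  termination_by p => p.1 + p.2

/-- The finite word ω_s ω_{s+1} ... ω_{t-1}. -/
def wordAt (ω : ℤ → List Bool) (s t : ℤ) : List (List Bool) :=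
  (List.range (t - s).toNat).map fun u => ω (s + u)

/-- A ξ-consistent factoring scheme for ω ∈ 𝒫_k^ℤ: `cuts j` is the set of starting
positions of the blocks of the level-(k+j) factorization, and `vert j s` is the
vertex whose coded basic block is the block starting at the cut `s`. -/
def IsConsistentScheme (ξ : ℕ × ℕ → Bool) (k : ℕ) (ω : ℤ → List Bool)
    (cuts : ℕ → Set ℤ) (vert : ℕ → ℤ → ℕ × ℕ) : Prop :=
  (∀ j : ℕ, ∀ M : ℤ, ∃ s ∈ cuts j, s < M) ∧
  (∀ j : ℕ, ∀ M : ℤ, ∃ t ∈ cuts j, M < t) ∧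
  (∀ j : ℕ, ∀ s ∈ cuts j, ∀ t ∈ cuts j, s < t → (∀ u ∈ cuts j, ¬(s < u ∧ u < t)) →
      (vert j s).1 + (vert j s).2 = k + j ∧
      wordAt ω s t = codedBlock ξ k (vert j s)) ∧
  (∀ j : ℕ, cuts (j + 1) ⊆ cuts j) ∧
  (∀ j : ℕ, ∀ s ∈ cuts (j + 1), ∀ t ∈ cuts (j + 1), s < t →
      (∀ u ∈ cuts (j + 1), ¬(s < u ∧ u < t)) →
      ∀ x y : ℕ, vert (j + 1) s = (x + 1, y + 1) →
        ∃ m ∈ cuts j, s < m ∧ m < t ∧ (∀ u ∈ cuts j, s < u → u < t → u = m) ∧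
          (if ξ (x + 1, y + 1)
            then vert j s = (x, y + 1) ∧ vert j m = (x + 1, y)
            else vert j s = (x + 1, y) ∧ vert j m = (x, y + 1)))

/-- The natural factoring scheme of the k-coding of γ: a level-(k+j) block begins at
coordinate t exactly when T^t γ begins with an all-ξ-minimal path to its level-(k+j) vertex. -/
noncomputable def natCuts (ξ : ℕ × ℕ → Bool) (k : ℕ) (γ : ℕ → Bool) : ℕ → Set ℤ :=
  fun j => {t | ∀ i < k + j, IsMinEdge ξ (adicIter ξ t γ) i}

noncomputable def natVert (ξ : ℕ × ℕ → Bool) (k : ℕ) (γ : ℕ → Bool) : ℕ → ℤ → ℕ × ℕ :=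
  fun j t => vertexAt (adicIter ξ t γ) (k + j)

open Classical in
/-- The return time r_n of the Kink Lemma, where `g` is the move of γ leaving (i,j). -/
noncomputable def kinkReturn (ξ : ℕ × ℕ → Bool) (i j : ℕ) (g : Bool) : ℕ :=
  let n := i + j
  if MoveMax ξ (i, j) g ∧ MoveMin ξ (i, j) (!g) then n.choose j
  else if (MoveMin ξ (i, j) g ∧ MoveMin ξ (i, j) (!g) ∧ g = true) ∨
          (MoveMax ξ (i, j) g ∧ MoveMax ξ (i, j) (!g) ∧ g = false) then (n + 1).choose (j + 1)
  else if (MoveMin ξ (i, j) g ∧ MoveMin ξ (i, j) (!g) ∧ g = false) ∨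
          (MoveMax ξ (i, j) g ∧ MoveMax ξ (i, j) (!g) ∧ g = true) then (n + 1).choose j
  else (n + 1).choose j + n.choose (j + 1)

/-- Convert a length-k list of moves to a function `Fin k → Bool`. -/
def segFn (k : ℕ) (w : List Bool) : Fin k → Bool := fun idx => w.getD idx false

/-- The subshift Σ_k of the k-codings: sequences all of whose finite subblocks occur
in some level-k coded basic block. -/
def SigmaK (ξ : ℕ × ℕ → Bool) (k : ℕ) : Set (ℤ → (Fin k → Bool)) :=
  {ω | ∀ (s : ℤ) (l : ℕ), ∃ p : ℕ × ℕ,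
    ((List.range l).map fun u => ω (s + u)) <:+: (codedBlock ξ k p).map (segFn k)}

/-- The subshift Σ_ξ ⊆ {a,b}^ℤ of sequences all of whose finite subblocks occur in
some basic block B_ξ(x,y). -/
def SigmaXi (ξ : ℕ × ℕ → Bool) : Set (ℤ → Bool) :=
  {ω | ∀ (s : ℤ) (l : ℕ), ∃ p : ℕ × ℕ,
    ((List.range l).map fun u => ω (s + u)) <:+: basicBlock ξ p}

/-- The big subshift Σ: sequences all of whose finite subblocks occur in some basic
block B_ξ(x,y) for some ordering ξ. -/
def BigShift : Set (ℤ → Bool) :=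
  {ω | ∀ (s : ℤ) (l : ℕ), ∃ (ξ : ℕ × ℕ → Bool) (p : ℕ × ℕ),
    ((List.range l).map fun u => ω (s + u)) <:+: basicBlock ξ p}

----------------------------------------------------------------

lemma vertexAt_sum (γ : ℕ → Bool) (n : ℕ) : (vertexAt γ n).1 + (vertexAt γ n).2 = n := by
  have h := Finset.card_filter_add_card_filter_not (s := Finset.range n)
    (p := fun i => γ i = false)
  have h2 : (Finset.range n).filter (fun i => γ i = true)
      = (Finset.range n).filter (fun i => ¬ γ i = false) := by
    apply Finset.filter_congr
    intro i _
    cases h : γ i <;> simp [h]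
  simp only [vertexAt, h2]
  simpa using h

lemma childOf_vertexAt (γ : ℕ → Bool) (n : ℕ) :
    childOf (vertexAt γ n) (γ n) = vertexAt γ (n + 1) := by
  simp only [vertexAt, childOf, Finset.range_add_one, Finset.filter_insert]
  cases h : γ n <;> simp [h, Finset.card_insert_of_notMem]

/-- An enumeration of the rationals. -/
noncomputable def eQ : ℕ → ℚ := fun k => (Denumerable.eqv ℚ).symm k

open Classical in
/-- Min-family path indexed by a real:  forced `true` on even positions, and the
`r`-cut of the rationals on odd positions. -/
noncomputable def gmin (r : ℝ) (n : ℕ) : Bool :=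
  if n % 2 = 0 then true else if (eQ (n / 2) : ℝ) < r then false else true

/-- Max-family path: the pointwise negation. -/
noncomputable def gmax (r : ℝ) (n : ℕ) : Bool := !(gmin r n)

lemma gmin_false_iff (r : ℝ) (n : ℕ) :
    gmin r n = false ↔ n % 2 = 1 ∧ ((eQ (n / 2) : ℝ) < r) := by
  unfold gmin
  by_cases h1 : n % 2 = 0
  · simp [h1]
  · rw [if_neg h1]
    by_cases h2 : (eQ (n / 2) : ℝ) < r <;> simp [h1, h2] <;> omega

lemma gmax_true_iff (r : ℝ) (n : ℕ) :
    gmax r n = true ↔ n % 2 = 1 ∧ ((eQ (n / 2) : ℝ) < r) := by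
  rw [gmax, Bool.not_eq_true', gmin_false_iff]

lemma gmin_even (r : ℝ) {n : ℕ} (h : n % 2 = 0) : gmin r n = true := by
  unfold gmin; simp [h]

/-- Chain lemma for the min family. -/
lemma chain_min {r s : ℝ} {n : ℕ}
    (hv : vertexAt (gmin r) (n + 1) = vertexAt (gmin s) (n + 1))
    (hr : gmin r n = true) (hs : gmin s n = false) : False := by
  obtain ⟨hodd, hes⟩ := (gmin_false_iff s n).1 hs
  have hre : ¬ ((eQ (n / 2) : ℝ) < r) := by
    intro hlt
    rw [(gmin_false_iff r n).2 ⟨hodd, hlt⟩] at hr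
    exact Bool.false_ne_true hr
  have hrs : r < s := lt_of_le_of_lt (not_lt.1 hre) hes
  have hsub : (Finset.range (n+1)).filter (fun i => gmin r i = false)
      ⊆ (Finset.range (n+1)).filter (fun i => gmin s i = false) := by
    intro i hi
    rw [Finset.mem_filter] at hi ⊢
    obtain ⟨h1, h2⟩ := hi
    obtain ⟨ho, he⟩ := (gmin_false_iff r i).1 h2
    exact ⟨h1, (gmin_false_iff s i).2 ⟨ho, he.trans hrs⟩⟩
  have hcard : ((Finset.range (n+1)).filter (fun i => gmin s i = false)).card
      ≤ ((Finset.range (n+1)).filter (fun i => gmin r i = false)).card :=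
    le_of_eq (congrArg Prod.fst hv).symm
  have heq := Finset.eq_of_subset_of_card_le hsub hcard
  have hnmem : n ∈ (Finset.range (n+1)).filter (fun i => gmin s i = false) :=
    Finset.mem_filter.2 ⟨Finset.self_mem_range_succ n, hs⟩
  rw [← heq, Finset.mem_filter] at hnmem
  rw [hnmem.2] at hr
  exact Bool.false_ne_true hr

/-- Chain lemma for the max family. -/
lemma chain_max {r s : ℝ} {n : ℕ}
    (hv : vertexAt (gmax r) (n + 1) = vertexAt (gmax s) (n + 1))
    (hr : gmax r n = false) (hs : gmax s n = true) : False := by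
  obtain ⟨hodd, hes⟩ := (gmax_true_iff s n).1 hs
  have hre : ¬ ((eQ (n / 2) : ℝ) < r) := by
    intro hlt
    rw [(gmax_true_iff r n).2 ⟨hodd, hlt⟩] at hr
    simp at hr
  have hrs : r < s := lt_of_le_of_lt (not_lt.1 hre) hes
  have hsub : (Finset.range (n+1)).filter (fun i => gmax s i = false)
      ⊆ (Finset.range (n+1)).filter (fun i => gmax r i = false) := by
    intro i hi
    rw [Finset.mem_filter] at hi ⊢
    obtain ⟨h1, h2⟩ := hi
    refine ⟨h1, ?_⟩
    by_contra h3
    have h4 : gmax r i = true := by cases h : gmax r i; exact absurd h h3; rfl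
    obtain ⟨ho, he⟩ := (gmax_true_iff r i).1 h4
    have : gmax s i = true := (gmax_true_iff s i).2 ⟨ho, he.trans hrs⟩
    rw [this] at h2; simp at h2
  have hcard : ((Finset.range (n+1)).filter (fun i => gmax r i = false)).card
      ≤ ((Finset.range (n+1)).filter (fun i => gmax s i = false)).card :=
    le_of_eq (congrArg Prod.fst hv)
  have heq := Finset.eq_of_subset_of_card_le hsub hcard
  have hnmem : n ∈ (Finset.range (n+1)).filter (fun i => gmax r i = false) :=
    Finset.mem_filter.2 ⟨Finset.self_mem_range_succ n, hr⟩
  rw [← heq, Finset.mem_filter] at hnmem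
  rw [hnmem.2] at hs
  simp at hs

/-- Cross lemma: a min-family path and a max-family path can only be at the same
vertex at an even time if all earlier odd bits are `false` (for the min path)
resp. make the max path `true`. -/
lemma cross_lemma {r s : ℝ} {n : ℕ} (hodd : n % 2 = 1)
    (hv : vertexAt (gmin r) (n + 1) = vertexAt (gmax s) (n + 1)) :
    (∀ i < n + 1, i % 2 = 1 → gmin r i = false) ∧
    (∀ i < n + 1, i % 2 = 1 → gmax s i = true) := by
  set t := n + 1 with ht
  have hteven : t % 2 = 0 := by omega
  set A := (Finset.range t).filter (fun i => gmin r i = false) with hA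
  set B := (Finset.range t).filter (fun i => gmax s i = false) with hB
  set O := (Finset.range t).filter (fun i => i % 2 = 1) with hO
  set E := (Finset.range t).filter (fun i => i % 2 = 0) with hE
  have hAO : A ⊆ O := by
    intro i hi
    rw [Finset.mem_filter] at hi ⊢
    exact ⟨hi.1, ((gmin_false_iff r i).1 hi.2).1⟩
  have hEB : E ⊆ B := by
    intro i hi
    rw [Finset.mem_filter] at hi ⊢
    refine ⟨hi.1, ?_⟩
    rw [gmax, gmin_even s hi.2]
    rfl
  have hEO : E.card ≤ O.card := by
    apply Finset.card_le_card_of_injOn (fun i => i + 1)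
    · intro a ha
      rw [Finset.mem_coe, Finset.mem_filter, Finset.mem_range] at ha ⊢
      dsimp only
      omega
    · intro a _ b _ h
      simpa using h
  have hOE : O.card ≤ E.card := by
    apply Finset.card_le_card_of_injOn (fun i => i - 1)
    · intro a ha
      rw [Finset.mem_coe, Finset.mem_filter, Finset.mem_range] at ha ⊢
      dsimp only
      omega
    · intro a ha b hb h
      have ha' : a % 2 = 1 := (Finset.mem_filter.1 (Finset.mem_coe.1 ha)).2
      have hb' : b % 2 = 1 := (Finset.mem_filter.1 (Finset.mem_coe.1 hb)).2
      have h' : a - 1 = b - 1 := h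
      omega
  have hcardEO : E.card = O.card := le_antisymm hEO hOE
  have hAB : A.card = B.card := congrArg Prod.fst hv
  have hOA : O.card ≤ A.card := by
    calc O.card = E.card := hcardEO.symm
    _ ≤ B.card := Finset.card_le_card hEB
    _ = A.card := hAB.symm
  have hAeq : A = O := Finset.eq_of_subset_of_card_le hAO hOA
  have hBE : B.card ≤ E.card := by
    calc B.card = A.card := hAB.symm
    _ ≤ O.card := Finset.card_le_card hAO
    _ = E.card := hcardEO.symm
  have hBeq : E = B := Finset.eq_of_subset_of_card_le hEB hBE
  constructor
  · intro i hi hio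
    have : i ∈ O := Finset.mem_filter.2 ⟨Finset.mem_range.2 hi, hio⟩
    rw [← hAeq, Finset.mem_filter] at this
    exact this.2
  · intro i hi hio
    by_contra hfalse
    have h4 : gmax s i = false := by
      cases h : gmax s i
      · rfl
      · exact absurd h hfalse
    have : i ∈ B := Finset.mem_filter.2 ⟨Finset.mem_range.2 hi, h4⟩
    rw [← hBeq, Finset.mem_filter] at this
    omega

def MinH (c : ℕ × ℕ) : Prop := ∃ r : ℝ, ∃ n : ℕ, vertexAt (gmin r) (n + 1) = c ∧ gmin r n = false
def MaxT (c : ℕ × ℕ) : Prop := ∃ r : ℝ, ∃ n : ℕ, vertexAt (gmax r) (n + 1) = c ∧ gmax r n = true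

open Classical in
noncomputable def xiGood : ℕ × ℕ → Bool := fun c => if MinH c ∨ MaxT c then true else false

lemma xiGood_true {c : ℕ × ℕ} (h : MinH c ∨ MaxT c) : xiGood c = true := by
  unfold xiGood; rw [if_pos h]

lemma xiGood_false {c : ℕ × ℕ} (h : ¬ (MinH c ∨ MaxT c)) : xiGood c = false := by
  unfold xiGood; rw [if_neg h]

/-- vertices at the same time have the same coordinate sum, so witnesses align. -/
lemma time_eq {γ δ : ℕ → Bool} {m i : ℕ} (h : vertexAt γ (m + 1) = vertexAt δ (i + 1)) :
    m = i := by
  have h1 := vertexAt_sum γ (m + 1)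
  have h2 := vertexAt_sum δ (i + 1)
  rw [h] at h1
  omega

lemma gmin_isMin (r : ℝ) (i : ℕ) : IsMinEdge xiGood (gmin r) i := by
  unfold IsMinEdge MoveMin
  rw [childOf_vertexAt]
  right; right
  cases hb : gmin r i
  · rw [xiGood_true (Or.inl ⟨r, i, rfl, hb⟩)]
    rfl
  · rw [xiGood_false]
    · rfl
    rintro (⟨s, m, hv, hf⟩ | ⟨s, m, hv, ht⟩)
    · have hm : m = i := time_eq hv
      subst hm
      exact chain_min hv.symm hb hf
    · have hm : m = i := time_eq hv
      subst hm
      have hodd : m % 2 = 1 := ((gmax_true_iff s m).1 ht).1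
      have := (cross_lemma hodd hv.symm).1 m (Nat.lt_succ_self m) hodd
      rw [this] at hb
      exact Bool.false_ne_true hb

lemma gmax_isMax (s : ℝ) (i : ℕ) : IsMaxEdge xiGood (gmax s) i := by
  unfold IsMaxEdge MoveMax
  rw [childOf_vertexAt]
  right; right
  cases hb : gmax s i
  · rw [xiGood_false]
    rintro (⟨r, m, hv, hf⟩ | ⟨s', m, hv, ht⟩)
    · have hm : m = i := time_eq hv
      subst hm
      have hodd : m % 2 = 1 := ((gmin_false_iff r m).1 hf).1
      have := (cross_lemma hodd hv).2 m (Nat.lt_succ_self m) hodd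
      rw [this] at hb
      simp at hb
    · have hm : m = i := time_eq hv
      subst hm
      exact chain_max hv.symm hb ht
  · rw [xiGood_true (Or.inr ⟨s, i, rfl, hb⟩)]

lemma gmin_lt_ne {r s : ℝ} (h : r < s) : gmin r ≠ gmin s := by
  obtain ⟨q, hq1, hq2⟩ := exists_rat_btwn h
  intro heq
  set k := Denumerable.eqv ℚ q with hk
  have hek : eQ k = q := by simp [eQ, hk]
  have h1 : gmin r (2 * k + 1) = true := by
    unfold gmin
    rw [if_neg (by omega)]
    rw [if_neg (by rw [show (2 * k + 1) / 2 = k by omega, hek]; exact not_lt.2 hq1.le)]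
  have h2 : gmin s (2 * k + 1) = false := by
    unfold gmin
    rw [if_neg (by omega)]
    rw [if_pos (by rw [show (2 * k + 1) / 2 = k by omega, hek]; exact hq2)]
  rw [heq, h2] at h1
  exact Bool.false_ne_true h1

lemma gmin_injective : Function.Injective gmin := by
  intro r s h
  by_contra hne
  rcases lt_or_gt_of_ne hne with hlt | hlt
  · exact gmin_lt_ne hlt h
  · exact gmin_lt_ne hlt h.symm

lemma gmax_injective : Function.Injective gmax := by
  intro r s h
  apply gmin_injective
  funext n
  have := congrFun h n
  unfold gmax at this
  exact Bool.not_inj this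


theorem stmt19 :
    (∃ ξ : ℕ × ℕ → Bool, ¬ (XMin ξ).Countable) ∧
    (∃ ξ : ℕ × ℕ → Bool, ¬ (XMin ξ).Countable ∧ ¬ (XMax ξ).Countable) := by
  have hmin : ¬ (XMin xiGood).Countable := by
    intro h
    have h2 : (Set.univ : Set ℝ).Countable :=
      Set.Countable.mono (fun r _ => (fun i => gmin_isMin r i : gmin r ∈ XMin xiGood))
        (h.preimage gmin_injective)
    exact Cardinal.not_countable_real h2
  have hmax : ¬ (XMax xiGood).Countable := by
    intro h
    have h2 : (Set.univ : Set ℝ).Countable :=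
      Set.Countable.mono (fun r _ => (fun i => gmax_isMax r i : gmax r ∈ XMax xiGood))
        (h.preimage gmax_injective)
    exact Cardinal.not_countable_real h2
  exact ⟨⟨xiGood, hmin⟩, ⟨xiGood, hmin, hmax⟩⟩
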